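/- For ε ∈ (0,1) define f_ε : (0,1] → ℝ by f_ε(r) = ε for r ∈ (0,1/2] and f_ε(r) = 1 for r ∈ (1/2,1]. Then ∫₀¹ r³ f_ε(r)² / (∫₀^r 2s f_ε(s) ds) dr ≥ ∫_{1/2}^1 r³ / (ε/4 + r² − 1/4) dr, and this quantity tends to +∞ as ε → 0⁺. Consequently, the bending energy ∫_{B(0,1)} |∇²(v_{f_ε}∘|·|)|² of the radial solution v_{f_ε} of det∇²v = f_ε(|x|) tends to +∞ as ε → 0⁺, whereas the function v(x) = |x|²/2 satisfies det∇²v = 1 ≥ f_ε and ∫_{B(0,1)} |∇²v|² = 2π; hence for small ε the radial constrained solution v_{f_ε} is not a minimizer of the relaxed problem with constraint det∇²v ≥ f_ε. -/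

import Mathlib

noncomputable section

open Real MeasureTheory Set

/-- The plane ℝ². -/
abbrev E2 : Type := EuclideanSpace ℝ (Fin 2)

/-- Partial derivative in the `i`-th coordinate direction. -/
def pd (i : Fin 2) (f : E2 → ℝ) (x : E2) : ℝ :=
  fderiv ℝ f x (EuclideanSpace.single i 1)

/-- Hessian of a scalar function on ℝ². -/
def hess (f : E2 → ℝ) (x : E2) : Fin 2 → Fin 2 → ℝ :=
  fun i j => pd i (pd j f) x

/-- Determinant of the Hessian. -/
def hessDet (f : E2 → ℝ) (x : E2) : ℝ :=
  hess f x 0 0 * hess f x 1 1 - hess f x 0 1 * hess f x 1 0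

/-- Squared Frobenius norm of a 2×2 matrix. -/
def frob2 (M : Fin 2 → Fin 2 → ℝ) : ℝ := ∑ i : Fin 2, ∑ j : Fin 2, (M i j) ^ 2

/-- The radial profile `v_f(r) = ∫₀ʳ (∫₀ˢ 2t f(t) dt)^{1/2} ds`. -/
def vf (f : ℝ → ℝ) (r : ℝ) : ℝ :=
  ∫ s in Set.Ioo (0 : ℝ) r, Real.sqrt (∫ t in Set.Ioo (0 : ℝ) s, 2 * t * f t)

/-- The step function `f_ε = ε·χ_{(0,1/2]} + χ_{(1/2,1]}`. -/
def feps (ε : ℝ) (r : ℝ) : ℝ := if r ≤ 1 / 2 then ε else 1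

def Gf (ε s : ℝ) : ℝ := if s ≤ 1/2 then ε * s^2 else ε/4 + s^2 - 1/4

section
variable (ε : ℝ)

lemma feps_meas (ε : ℝ) : Measurable (feps ε) :=
  Measurable.ite measurableSet_Iic measurable_const measurable_const

lemma intInt (ε a b : ℝ) : IntervalIntegrable (fun t => 2*t*feps ε t) volume a b := by
  rw [intervalIntegrable_iff]
  refine Measure.integrableOn_of_bounded (M := 2*(max (abs a) (abs b))*(abs ε+1))
    measure_Ioc_lt_top.ne
    ((measurable_const.mul measurable_id).mul (feps_meas ε)).aestronglyMeasurable ?_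
  filter_upwards [ae_restrict_mem measurableSet_uIoc] with t ht
  have h1 : abs t ≤ max (abs a) (abs b) := by
    rcases le_total a b with h | h
    · rw [uIoc_of_le h] at ht
      rw [abs_le]; constructor
      · linarith [neg_abs_le a, le_max_left (abs a) (abs b), ht.1]
      · linarith [le_abs_self b, le_max_right (abs a) (abs b), ht.2]
    · rw [uIoc_of_ge h] at ht
      rw [abs_le]; constructor
      · linarith [neg_abs_le b, le_max_right (abs a) (abs b), ht.1]
      · linarith [le_abs_self a, le_max_left (abs a) (abs b), ht.2]
  have h2 : abs (feps ε t) ≤ abs ε + 1 := by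
    unfold feps; split
    · linarith [abs_nonneg ε]
    · rw [abs_one]; linarith [abs_nonneg ε]
  have h3 : (0:ℝ) ≤ max (abs a) (abs b) := le_trans (abs_nonneg a) (le_max_left _ _)
  calc ‖2 * t * feps ε t‖ = 2 * abs t * abs (feps ε t) := by
        rw [Real.norm_eq_abs, abs_mul, abs_mul]; norm_num
    _ ≤ 2 * (max (abs a) (abs b)) * (abs ε + 1) := by
        apply mul_le_mul _ h2 (abs_nonneg _) (by positivity)
        linarith

lemma pieceval (ε c : ℝ) {a b : ℝ} (hab : a ≤ b) (h : ∀ t ∈ Ioo a b, feps ε t = c) :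
    ∫ t in a..b, 2*t*feps ε t = c*(b^2 - a^2) := by
  rw [intervalIntegral.integral_of_le hab, MeasureTheory.integral_Ioc_eq_integral_Ioo,
    setIntegral_congr_fun measurableSet_Ioo (g := fun t => (2*c)*t)
      (fun t ht => by rw [h t ht]; ring),
    ← MeasureTheory.integral_Ioc_eq_integral_Ioo, ← intervalIntegral.integral_of_le hab,
    intervalIntegral.integral_const_mul, integral_id]
  ring

lemma gval (ε : ℝ) {s : ℝ} (hs : 0 < s) :
    (∫ t in Ioo (0:ℝ) s, 2*t*feps ε t) = Gf ε s := by
  rw [← MeasureTheory.integral_Ioc_eq_integral_Ioo, ← intervalIntegral.integral_of_le hs.le]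
  unfold Gf
  split
  · next h =>
    rw [pieceval ε ε hs.le (fun t ht => if_pos (le_trans ht.2.le h))]; ring
  · next h =>
    push_neg at h
    rw [← intervalIntegral.integral_add_adjacent_intervals (b := 1/2) (intInt ε 0 _) (intInt ε _ s),
      pieceval ε ε (by norm_num) (fun t ht => if_pos ht.2.le),
      pieceval ε 1 h.le (fun t ht => if_neg (not_le.mpr ht.1))]
    ring

lemma Gf_pos (hε : 0 < ε) {s : ℝ} (hs : 0 < s) : 0 < Gf ε s := by
  unfold Gf; split
  · positivity
  · next h => push_neg at h; nlinarith

lemma Gf_meas : Measurable (Gf ε) := by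
  unfold Gf
  exact Measurable.ite measurableSet_Iic (by fun_prop) (by fun_prop)

def hExp (r : ℝ) : ℝ := r^3 * (feps ε r)^2 / Gf ε r

lemma hExp_meas : Measurable (hExp ε) := by
  unfold hExp
  exact (((measurable_id.pow_const 3).mul ((feps_meas ε).pow_const 2)).div (Gf_meas ε))

lemma hExp_nonneg (hε : 0 < ε) {r : ℝ} (hr : 0 < r) : 0 ≤ hExp ε r := by
  have h1 := Gf_pos ε hε hr
  unfold hExp
  positivity

lemma hExp_bdd (hε : 0 < ε) {r : ℝ} (hr : r ∈ Ioo (0:ℝ) 1) : hExp ε r ≤ ε + 4/ε := by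
  have h4 : (0:ℝ) ≤ 4/ε := by positivity
  unfold hExp Gf feps
  rcases le_or_gt r (1/2) with h | h
  · rw [if_pos h, if_pos h]
    have hr0 : r ≠ 0 := ne_of_gt hr.1
    have : r^3*ε^2/(ε*r^2) = ε * r := by
      field_simp
    rw [this]
    nlinarith [hr.1, hr.2]
  · rw [if_neg (not_le.mpr h), if_neg (not_le.mpr h)]
    have hd : ε/4 ≤ ε/4 + r^2 - 1/4 := by nlinarith
    have hd0 : (0:ℝ) < ε/4 := by linarith
    calc r^3*1^2/(ε/4+r^2-1/4) ≤ 1/(ε/4) := by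
          apply div_le_div₀ (by positivity) (by nlinarith [hr.2, hr.1]) hd0 hd
      _ = 4/ε := by rw [one_div_div]
      _ ≤ ε + 4/ε := by linarith

lemma hExp_intOn (hε : 0 < ε) : IntegrableOn (hExp ε) (Ioo (0:ℝ) 1) := by
  refine Measure.integrableOn_of_bounded (M := ε + 4/ε) (by simp) 
    (hExp_meas ε).aestronglyMeasurable ?_
  filter_upwards [ae_restrict_mem measurableSet_Ioo] with r hr
  rw [Real.norm_eq_abs, abs_of_nonneg (hExp_nonneg ε hε hr.1)]
  exact hExp_bdd ε hε hr

-- explicit value of the lower-bound integral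
lemma Ival (hε : 0 < ε) :
    (∫ r in Ioo ((1:ℝ)/2) 1, r ^ 3 / (ε / 4 + r ^ 2 - 1 / 4))
      = 3/8 + ((1-ε)/8)*(Real.log ((3+ε)/4) - Real.log (ε/4)) := by
  have hden : ∀ r : ℝ, r ∈ Set.uIcc (1/2:ℝ) 1 → 0 < ε/4 + r^2 - 1/4 := by
    intro r hr
    rw [Set.uIcc_of_le (by norm_num)] at hr
    nlinarith [hr.1]
  have hF : ∀ r ∈ Set.uIcc (1/2:ℝ) 1,
      HasDerivAt (fun r => r^2/2 - ((ε-1)/8)*Real.log (r^2+(ε-1)/4))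
        (r^3/(ε/4+r^2-1/4)) r := by
    intro r hr
    have h0 : r^2 + (ε-1)/4 ≠ 0 := by have := hden r hr; intro h; nlinarith
    have h1 : HasDerivAt (fun r : ℝ => r^2+(ε-1)/4) (2*r) r := by
      simpa using ((hasDerivAt_pow 2 r).add_const ((ε-1)/4))
    have h2 := (h1.log h0)
    have h3 := ((hasDerivAt_pow 2 r).div_const 2).sub (h2.const_mul ((ε-1)/8))
    refine h3.congr_deriv (Eq.symm ?_)
    have hpos := hden r hr
    have h5 : ε/4+r^2-1/4 ≠ 0 := ne_of_gt hpos
    rw [show r^2+(ε-1)/4 = ε/4+r^2-1/4 from by ring, div_eq_iff h5, sub_mul,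
      mul_assoc, div_mul_cancel₀ _ h5]
    ring
  rw [← MeasureTheory.integral_Ioc_eq_integral_Ioo,
    ← intervalIntegral.integral_of_le (by norm_num : (1:ℝ)/2 ≤ 1),
    intervalIntegral.integral_eq_sub_of_hasDerivAt hF]
  · have e1 : (1:ℝ)^2 + (ε-1)/4 = (3+ε)/4 := by ring
    have e2 : ((1:ℝ)/2)^2 + (ε-1)/4 = ε/4 := by ring
    simp only [e1, e2]
    ring
  · apply ContinuousOn.intervalIntegrable
    apply ContinuousOn.div (by fun_prop) (by fun_prop)
    intro r hr
    exact ne_of_gt (hden r hr)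

lemma part2 : Filter.Tendsto
    (fun ε => ∫ r in Set.Ioo ((1 : ℝ) / 2) 1, r ^ 3 / (ε / 4 + r ^ 2 - 1 / 4))
    (nhdsWithin 0 (Set.Ioi 0)) Filter.atTop := by
  apply Filter.Tendsto.congr' (f₁ := fun ε => 3/8 + ((1-ε)/8)*(Real.log ((3+ε)/4) - Real.log (ε/4)))
  · filter_upwards [self_mem_nhdsWithin] with ε (hε : ε ∈ Ioi (0:ℝ))
    exact (Ival ε hε).symm
  · apply Filter.tendsto_atTop_add_const_left
    refine Filter.Tendsto.pos_mul_atTop (C := 1/8) (by norm_num) ?_ ?_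
    · apply Filter.Tendsto.mono_left _ nhdsWithin_le_nhds
      have : Filter.Tendsto (fun ε:ℝ => (1-ε)/8) (nhds 0) (nhds ((1-0)/8)) :=
        ((continuous_const.sub continuous_id).div_const 8).tendsto 0
      simpa using this
    · simp_rw [sub_eq_add_neg]
      refine Filter.Tendsto.add_atTop (C := Real.log (3/4)) ?_ ?_
      · apply Filter.Tendsto.mono_left _ nhdsWithin_le_nhds
        have h1 : ContinuousAt (fun ε:ℝ => Real.log ((3+ε)/4)) 0 := by
          apply (Real.continuousAt_log (by norm_num)).comp
          fun_prop
        have := h1.tendsto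
        simpa using this
      · apply Filter.tendsto_neg_atBot_atTop.comp
        apply Real.tendsto_log_nhdsGT_zero.comp
        rw [Filter.tendsto_iff_comap, nhdsWithin, Filter.comap_inf]
        refine le_inf ?_ ?_
        · rw [← Filter.tendsto_iff_comap]
          apply Filter.Tendsto.mono_left _ nhdsWithin_le_nhds
          have : Filter.Tendsto (fun ε:ℝ => ε/4) (nhds 0) (nhds (0/4)) :=
            (continuous_id.div_const 4).tendsto 0
          simpa using this
        · refine le_trans inf_le_right ?_
          rw [Filter.comap_principal]
          apply Filter.principal_mono.mpr
          intro x hx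
          simp only [Set.mem_preimage, Set.mem_Ioi] at *
          positivity


-- derivative of half square norm
lemma q2_hasFDeriv (x : E2) : HasFDerivAt (fun y : E2 => ‖y‖^2/2) (innerSL ℝ x) x := by
  have h := ((hasStrictFDerivAt_norm_sq x).hasFDerivAt.const_smul (1/2:ℝ))
  have e : (fun y : E2 => ‖y‖^2/2) = fun y : E2 => (1/2:ℝ) • ‖y‖^2 := by
    funext y; simp [smul_eq_mul]; ring
  rw [e]
  refine h.congr_fderiv (Eq.symm ?_)
  ext v
  simp [two_smul]
  ring

lemma pd_q2 (j : Fin 2) (x : E2) : pd j (fun y : E2 => ‖y‖^2/2) x = x j := by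
  rw [pd, (q2_hasFDeriv x).fderiv]
  simpa using EuclideanSpace.inner_single_right (𝕜 := ℝ) j 1 x

lemma hess_q2 (i j : Fin 2) (x : E2) :
    hess (fun y : E2 => ‖y‖^2/2) x i j = if i = j then 1 else 0 := by
  unfold hess
  have : pd j (fun y : E2 => ‖y‖^2/2) = fun y : E2 => EuclideanSpace.proj j y := by
    funext y; rw [pd_q2]; simp
  rw [pd, this]
  rw [(EuclideanSpace.proj j (𝕜 := ℝ)).hasFDerivAt.fderiv]
  have e2 : (EuclideanSpace.proj j) (EuclideanSpace.single i 1 : E2)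
      = (EuclideanSpace.single i (1:ℝ) : E2) j := rfl
  rw [e2, EuclideanSpace.single_apply]
  by_cases h : i = j
  · subst h; simp
  · rw [if_neg (fun hc => h hc.symm), if_neg h]

lemma hessdet_q2 (x : E2) : hessDet (fun y : E2 => ‖y‖^2/2) x = 1 := by
  unfold hessDet
  rw [hess_q2, hess_q2, hess_q2, hess_q2]
  norm_num

lemma frob2_q2 (x : E2) : frob2 (hess (fun y : E2 => ‖y‖^2/2) x) = 2 := by
  unfold frob2
  rw [Fin.sum_univ_two, Fin.sum_univ_two, Fin.sum_univ_two,
    hess_q2, hess_q2, hess_q2, hess_q2]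
  norm_num

lemma vol_ball : volume (Metric.ball (0:E2) 1) = ENNReal.ofReal π := by
  rw [EuclideanSpace.volume_ball]
  simp only [Fintype.card_fin]
  have h2 : ((2:ℕ):ℝ)/2 + 1 = 2 := by norm_num
  rw [h2, show (2:ℝ) = (1:ℝ) + 1 from by norm_num, Real.Gamma_add_one (by norm_num),
    Real.Gamma_one]
  rw [Real.sq_sqrt pi_nonneg]
  norm_num

lemma energy_q2 :
    (∫ x in Metric.ball (0:E2) 1, frob2 (hess (fun y : E2 => ‖y‖^2/2) x)) = 2 * π := by
  have : ∀ x ∈ Metric.ball (0:E2) 1, frob2 (hess (fun y : E2 => ‖y‖^2/2) x) = 2 :=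
    fun x _ => frob2_q2 x
  rw [setIntegral_congr_fun measurableSet_ball this, setIntegral_const, measureReal_def, vol_ball]
  rw [ENNReal.toReal_ofReal pi_nonneg]
  simp [mul_comm]

lemma Gf_cont (ε : ℝ) : Continuous (Gf ε) := by
  unfold Gf
  apply Continuous.if_le (by fun_prop) (by fun_prop) continuous_id continuous_const
  intro s hs
  have : s = 1/2 := hs
  rw [this]; ring

lemma Gf_pos' {ε : ℝ} (hε : 0 < ε) {s : ℝ} (hs : 0 < s) : 0 < Gf ε s := by
  unfold Gf; split
  · positivity
  · next h => push_neg at h; nlinarith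

def V (ε : ℝ) (r : ℝ) : ℝ := ∫ s in (0:ℝ)..r, Real.sqrt (Gf ε s)

lemma V_hasDerivAt (ε : ℝ) (r : ℝ) : HasDerivAt (V ε) (Real.sqrt (Gf ε r)) r :=
  (Continuous.integral_hasStrictDerivAt ((Gf_cont ε).sqrt) 0 r).hasDerivAt

lemma sqrtG_hasDerivAt {ε : ℝ} (hε : 0 < ε) {r : ℝ} (hr : 0 < r) (hne : r ≠ 1/2) :
    HasDerivAt (fun s => Real.sqrt (Gf ε s)) (r * feps ε r / Real.sqrt (Gf ε r)) r := by
  have hG : HasDerivAt (Gf ε) (2 * r * feps ε r) r := by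
    rcases lt_or_gt_of_ne hne with h | h
    · have hev : ∀ᶠ s in nhds r, Gf ε s = ε * s^2 := by
        filter_upwards [Iio_mem_nhds h] with s (hs : s < 1/2)
        exact if_pos hs.le
      have : HasDerivAt (fun s : ℝ => ε * s^2) (ε * (2*r)) r := by
        simpa using ((hasDerivAt_pow 2 r).const_mul ε)
      refine HasDerivAt.congr_of_eventuallyEq ?_ hev
      refine this.congr_deriv (Eq.symm ?_)
      unfold feps; rw [if_pos h.le]; ring
    · have hev : ∀ᶠ s in nhds r, Gf ε s = ε/4 + s^2 - 1/4 := by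
        filter_upwards [Ioi_mem_nhds h] with s (hs : 1/2 < s)
        exact if_neg (not_le.mpr hs)
      have : HasDerivAt (fun s : ℝ => ε/4 + s^2 - 1/4) (2*r) r := by
        simpa using (((hasDerivAt_pow 2 r).const_add (ε/4)).sub_const (1/4))
      refine HasDerivAt.congr_of_eventuallyEq ?_ hev
      refine this.congr_deriv (Eq.symm ?_)
      unfold feps; rw [if_neg (not_le.mpr h)]; ring
  have := hG.sqrt (ne_of_gt (Gf_pos' hε hr))
  convert this using 1
  rw [show (2*r*feps ε r : ℝ) = 2*(r * feps ε r) from by ring,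
    show (2*Real.sqrt (Gf ε r) : ℝ) = 2*(Real.sqrt (Gf ε r)) from rfl,
    mul_div_mul_left _ _ (two_ne_zero)]

lemma nrm_hasFDerivAt (x : E2) (hx : x ≠ 0) :
    HasFDerivAt (fun y : E2 => ‖y‖) ((‖x‖)⁻¹ • innerSL ℝ x) x := by
  have hn : ‖x‖ ≠ 0 := norm_ne_zero_iff.mpr hx
  have h1 : HasDerivAt Real.sqrt (1/(2*Real.sqrt (‖x‖^2))) (‖x‖^2) :=
    hasDerivAt_sqrt (pow_ne_zero _ hn)
  have h2 := (hasStrictFDerivAt_norm_sq x).hasFDerivAt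
  have h3 := h1.comp_hasFDerivAt x h2
  have e : (fun y : E2 => ‖y‖) = fun y : E2 => Real.sqrt (‖y‖^2) := by
    funext y; rw [Real.sqrt_sq (norm_nonneg _)]
  rw [e]
  refine h3.congr_fderiv (Eq.symm ?_)
  rw [Real.sqrt_sq (norm_nonneg _)]
  ext v
  simp only [ContinuousLinearMap.coe_smul', Pi.smul_apply, smul_eq_mul,
    ContinuousLinearMap.smul_apply, two_smul, ContinuousLinearMap.add_apply]
  field_simp
  ring

lemma inner_single (x : E2) (j : Fin 2) :
    (innerSL ℝ x) (EuclideanSpace.single j 1) = x j := by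
  have := EuclideanSpace.inner_single_right (𝕜 := ℝ) j 1 x
  simpa using this

def U (ε : ℝ) : E2 → ℝ := fun y => V ε ‖y‖

lemma U_hasFDerivAt (ε : ℝ) {x : E2} (hx : x ≠ 0) :
    HasFDerivAt (U ε) (Real.sqrt (Gf ε ‖x‖) • ((‖x‖)⁻¹ • innerSL ℝ x)) x :=
  (V_hasDerivAt ε ‖x‖).comp_hasFDerivAt x (nrm_hasFDerivAt x hx)

def P (ε : ℝ) (j : Fin 2) : E2 → ℝ := fun y => Real.sqrt (Gf ε ‖y‖) * y j / ‖y‖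

lemma pd_U (ε : ℝ) (j : Fin 2) {x : E2} (hx : x ≠ 0) : pd j (U ε) x = P ε j x := by
  rw [pd, (U_hasFDerivAt ε hx).fderiv]
  simp only [ContinuousLinearMap.coe_smul', Pi.smul_apply, smul_eq_mul]
  rw [inner_single]
  unfold P
  field_simp

def phiD (ε r : ℝ) : ℝ :=
  (r * feps ε r / Real.sqrt (Gf ε r) * r - Real.sqrt (Gf ε r) * 1)/r^2

-- derivative of φ(t) = √(Gf t)/t
lemma phi_hasDerivAt {ε : ℝ} (hε : 0 < ε) {r : ℝ} (hr : 0 < r) (hne : r ≠ 1/2) :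
    HasDerivAt (fun t => Real.sqrt (Gf ε t)/t) (phiD ε r) r :=
  (sqrtG_hasDerivAt hε hr hne).div (hasDerivAt_id r) (ne_of_gt hr)

lemma P_hasFDerivAt {ε : ℝ} (hε : 0 < ε) (j : Fin 2) {x : E2} (hx : 0 < ‖x‖)
    (hne : ‖x‖ ≠ 1/2) :
    HasFDerivAt (P ε j)
      ((Real.sqrt (Gf ε ‖x‖)/‖x‖) • (EuclideanSpace.proj j : E2 →L[ℝ] ℝ) +
        (x j * phiD ε ‖x‖) • ((‖x‖)⁻¹ • innerSL ℝ x)) x := by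
  have hx0 : x ≠ 0 := fun h => by simp [h] at hx; 
  have hphi := (phi_hasDerivAt hε hx hne).comp_hasFDerivAt x (nrm_hasFDerivAt x hx0)
  have hproj : HasFDerivAt (fun y : E2 => y j) (EuclideanSpace.proj j : E2 →L[ℝ] ℝ) x :=
    (EuclideanSpace.proj j (𝕜 := ℝ)).hasFDerivAt
  have hmul := hphi.mul' hproj
  have e : P ε j = fun y : E2 => (Real.sqrt (Gf ε ‖y‖)/‖y‖) * y j := by
    funext y; unfold P; rw [mul_div_right_comm]
  rw [e]
  refine hmul.congr_fderiv (Eq.symm ?_)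
  ext v
  simp only [ContinuousLinearMap.add_apply, ContinuousLinearMap.coe_smul', Pi.smul_apply,
    smul_eq_mul, ContinuousLinearMap.smul_apply, Function.comp_apply,
    ContinuousLinearMap.smulRight_apply, op_smul_eq_mul]
  ring

lemma hess_U {ε : ℝ} (hε : 0 < ε) {x : E2} (hx : 0 < ‖x‖) (hne : ‖x‖ ≠ 1/2) (i j : Fin 2) :
    hess (U ε) x i j =
      (Real.sqrt (Gf ε ‖x‖)/‖x‖) * (if i = j then 1 else 0)
        + (phiD ε ‖x‖ * (‖x‖)⁻¹) * x i * x j := by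
  have hx0 : x ≠ 0 := fun h => by simp [h] at hx
  unfold hess
  have hev : (pd j (U ε)) =ᶠ[nhds x] P ε j := by
    filter_upwards [isOpen_compl_singleton.mem_nhds hx0] with y (hy : y ≠ 0)
    exact pd_U ε j hy
  rw [pd, hev.fderiv_eq, (P_hasFDerivAt hε j hx hne).fderiv]
  simp only [ContinuousLinearMap.add_apply, ContinuousLinearMap.coe_smul', Pi.smul_apply,
    smul_eq_mul, ContinuousLinearMap.smul_apply]
  rw [inner_single]
  have e2 : (EuclideanSpace.proj j) (EuclideanSpace.single i 1 : E2)
      = (EuclideanSpace.single i (1:ℝ) : E2) j := rfl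
  rw [e2, EuclideanSpace.single_apply]
  by_cases h : i = j
  · subst h; simp; ring
  · rw [if_neg (fun hc => h hc.symm), if_neg h]; ring

lemma norm_sq_coords (x : E2) : x 0^2 + x 1^2 = ‖x‖^2 := by
  rw [EuclideanSpace.norm_eq, Real.sq_sqrt (by positivity)]
  rw [Fin.sum_univ_two, Real.norm_eq_abs, Real.norm_eq_abs, sq_abs, sq_abs]

lemma frob2_hess_U {ε : ℝ} (hε : 0 < ε) {x : E2} (hx : 0 < ‖x‖) (hne : ‖x‖ ≠ 1/2) :
    frob2 (hess (U ε) x) =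
      (‖x‖ * feps ε ‖x‖)^2/Gf ε ‖x‖ + Gf ε ‖x‖/‖x‖^2 := by
  set r := ‖x‖ with hr
  set s := Real.sqrt (Gf ε r) with hs
  have hG := Gf_pos' hε hx
  have hs2 : s^2 = Gf ε r := Real.sq_sqrt hG.le
  have hs0 : s ≠ 0 := ne_of_gt (Real.sqrt_pos.mpr hG)
  have hR := norm_sq_coords x
  unfold frob2
  rw [Fin.sum_univ_two, Fin.sum_univ_two, Fin.sum_univ_two,
    hess_U hε hx hne, hess_U hε hx hne, hess_U hε hx hne, hess_U hε hx hne]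
  simp only [if_pos rfl, reduceIte]
  have key : (s/r * 1 + (phiD ε r * r⁻¹) * x 0 * x 0)^2
      + (s/r * 0 + (phiD ε r * r⁻¹) * x 0 * x 1)^2
      + ((s/r * 0 + (phiD ε r * r⁻¹) * x 1 * x 0)^2
      + (s/r * 1 + (phiD ε r * r⁻¹) * x 1 * x 1)^2)
      = 2*(s/r)^2 + 2*(phiD ε r * r⁻¹)*(s/r)*(x 0^2 + x 1^2)
        + (phiD ε r * r⁻¹)^2 * (x 0^2 + x 1^2)^2 := by ring
  rw [show (if (0:Fin 2) = 1 then (1:ℝ) else 0) = 0 from rfl,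
    show (if (1:Fin 2) = 0 then (1:ℝ) else 0) = 0 from rfl] at *
  rw [key, hR, ← hs2]
  unfold phiD
  rw [← hs]
  field_simp
  ring

lemma vf_eq_U {ε : ℝ} : (fun y : E2 => vf (feps ε) ‖y‖) = U ε := by
  funext y
  rcases eq_or_lt_of_le (norm_nonneg y) with h0 | h0
  · have hy0 : ‖y‖ = 0 := h0.symm
    simp [vf, U, V, hy0]
  · unfold vf U V
    rw [setIntegral_congr_fun measurableSet_Ioo
      (g := fun s => Real.sqrt (Gf ε s)) (fun s hs => by rw [gval ε hs.1]),
      ← MeasureTheory.integral_Ioc_eq_integral_Ioo,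
      ← intervalIntegral.integral_of_le h0.le]

def Fe (ε : ℝ) : ℝ → ℝ :=
  fun r => if r ∈ Ioo (0:ℝ) 1 then (r*feps ε r)^2/Gf ε r + Gf ε r/r^2 else 0

lemma Fe_meas (ε : ℝ) : Measurable (Fe ε) := by
  unfold Fe
  refine Measurable.ite measurableSet_Ioo ?_ measurable_const
  exact (((measurable_id.mul (feps_meas ε)).pow_const 2).div (Gf_meas ε)).add
    ((Gf_meas ε).div (measurable_id.pow_const 2))

lemma Gf_div_bdd {ε : ℝ} (hε : 0 < ε) {y : ℝ} (hy : y ∈ Ioo (0:ℝ) 1) :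
    Gf ε y / y ≤ ε + (ε/4+1)*2 := by
  unfold Gf
  split
  · next h =>
    rw [show ε * y^2 / y = ε * y * (y / y) from by ring, div_self (ne_of_gt hy.1), mul_one]
    nlinarith [hy.1, hy.2]
  · next h =>
    push_neg at h
    have h2 : (1:ℝ)/y ≤ 2 := by
      rw [div_le_iff₀ hy.1]; linarith
    have : ε/4 + y^2 - 1/4 ≤ ε/4 + 1 := by nlinarith [hy.2]
    calc (ε/4 + y^2 - 1/4)/y ≤ (ε/4+1)/y := (div_le_div_iff_of_pos_right hy.1).mpr this
      _ = (ε/4+1) * (1/y) := by ring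
      _ ≤ (ε/4+1)*2 := by nlinarith [hy.1]
      _ ≤ ε + (ε/4+1)*2 := by linarith

lemma rFe_bdd {ε : ℝ} (hε : 0 < ε) {y : ℝ} (hy : y ∈ Ioo (0:ℝ) 1) :
    y * Fe ε y = hExp ε y + Gf ε y / y := by
  unfold Fe
  rw [if_pos hy]
  unfold hExp
  have hy0 : y ≠ 0 := ne_of_gt hy.1
  field_simp

lemma rFe_intOn {ε : ℝ} (hε : 0 < ε) : IntegrableOn (fun y => y * Fe ε y) (Ioo (0:ℝ) 1) := by
  refine Measure.integrableOn_of_bounded (M := (ε + 4/ε) + (ε + (ε/4+1)*2)) (by simp)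
    (measurable_id.mul (Fe_meas ε)).aestronglyMeasurable ?_
  filter_upwards [ae_restrict_mem measurableSet_Ioo] with y hy
  have h1 : 0 ≤ Gf ε y / y := le_of_lt (div_pos (Gf_pos' hε hy.1) hy.1)
  have h2 : 0 ≤ hExp ε y := hExp_nonneg ε hε hy.1
  rw [rFe_bdd hε hy, Real.norm_eq_abs, abs_of_nonneg (by linarith)]
  have h3 := hExp_bdd ε hε hy
  have h4 := Gf_div_bdd hε hy
  linarith

lemma energy_eq {ε : ℝ} (hε : 0 < ε) :
    (∫ x in Metric.ball (0:E2) 1, frob2 (hess (fun y => vf (feps ε) ‖y‖) x))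
      = 2 * π * ∫ y in Ioo (0:ℝ) 1, y * Fe ε y := by
  rw [vf_eq_U]
  have hN : volume ({(0:E2)} ∪ Metric.sphere (0:E2) (1/2)) = 0 :=
    measure_union_null (measure_singleton 0) (Measure.addHaar_sphere volume 0 (1/2))
  have hae : ∀ᵐ x, x ∈ Metric.ball (0:E2) 1 → frob2 (hess (U ε) x) = Fe ε ‖x‖ := by
    filter_upwards [compl_mem_ae_iff.mpr hN] with x hx hball
    simp only [Set.mem_compl_iff, Set.mem_union, Set.mem_singleton_iff,
      Metric.mem_sphere, not_or] at hx
    have hx1 : x ≠ 0 := hx.1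
    have hx2 : ‖x‖ ≠ 1/2 := by
      intro h; exact hx.2 (by rw [dist_zero_right, h])
    have hxpos : 0 < ‖x‖ := norm_pos_iff.mpr hx1
    have hxlt : ‖x‖ < 1 := mem_ball_zero_iff.mp hball
    rw [frob2_hess_U hε hxpos hx2]
    unfold Fe
    rw [if_pos ⟨hxpos, hxlt⟩]
  rw [setIntegral_congr_ae measurableSet_ball hae]
  rw [setIntegral_eq_integral_of_forall_compl_eq_zero (f := fun x : E2 => Fe ε ‖x‖)
    (fun x hx => by
      simp only [Fe]
      rw [if_neg (fun hmem => hx (mem_ball_zero_iff.mpr hmem.2))])]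
  rw [integral_fun_norm_addHaar volume (Fe ε)]
  have hdim : Module.finrank ℝ E2 = 2 := finrank_euclideanSpace_fin
  rw [hdim]
  have htail : ∫ y in Ioi (0:ℝ), y ^ (2-1) • Fe ε y = ∫ y in Ioo (0:ℝ) 1, y * Fe ε y := by
    simp only [show (2-1 : ℕ) = 1 from rfl, pow_one, smul_eq_mul]
    have hvan : ∀ y, y ∉ Ioo (0:ℝ) 1 → y * Fe ε y = 0 := by
      intro y hy
      unfold Fe
      rw [if_neg hy, mul_zero]
    rw [setIntegral_eq_integral_of_forall_compl_eq_zero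
        (fun y (hy : y ∉ Ioi (0:ℝ)) => hvan y (fun hmem => hy hmem.1)),
      ← setIntegral_eq_integral_of_forall_compl_eq_zero hvan]
  rw [htail, measureReal_def, vol_ball, ENNReal.toReal_ofReal pi_nonneg]
  rw [nsmul_eq_mul, smul_eq_mul]
  push_cast
  ring

end

lemma lhs_eq {ε : ℝ} :
    (∫ r in Ioo ((1:ℝ)/2) 1, r ^ 3 / (ε / 4 + r ^ 2 - 1 / 4))
      = ∫ r in Ioo ((1:ℝ)/2) 1, hExp ε r := by
  refine setIntegral_congr_fun measurableSet_Ioo (fun r hr => ?_)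
  unfold hExp feps Gf
  rw [if_neg (not_le.mpr hr.1), if_neg (not_le.mpr hr.1), one_pow, mul_one]

lemma int_hExp_mono {ε : ℝ} (hε : 0 < ε) :
    (∫ r in Ioo ((1:ℝ)/2) 1, hExp ε r) ≤ ∫ r in Ioo (0:ℝ) 1, hExp ε r := by
  refine setIntegral_mono_set (hExp_intOn ε hε) ?_ ?_
  · filter_upwards [ae_restrict_mem measurableSet_Ioo] with r hr
    exact hExp_nonneg ε hε hr.1
  · filter_upwards with r (hr : r ∈ Ioo ((1:ℝ)/2) 1)
    exact ⟨by linarith [hr.1], hr.2⟩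

lemma rhs_eq {ε : ℝ} :
    (∫ r in Ioo (0:ℝ) 1,
        r ^ 3 * (feps ε r) ^ 2 / ∫ s in Ioo (0:ℝ) r, 2 * s * feps ε s)
      = ∫ r in Ioo (0:ℝ) 1, hExp ε r := by
  refine setIntegral_congr_fun measurableSet_Ioo (fun r hr => ?_)
  rw [gval ε hr.1]
  rfl

lemma part1 {ε : ℝ} (hε : ε ∈ Ioo (0:ℝ) 1) :
    (∫ r in Ioo ((1:ℝ)/2) 1, r ^ 3 / (ε / 4 + r ^ 2 - 1 / 4))
      ≤ ∫ r in Ioo (0:ℝ) 1,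
          r ^ 3 * (feps ε r) ^ 2 / ∫ s in Ioo (0:ℝ) r, 2 * s * feps ε s := by
  rw [lhs_eq, rhs_eq]
  exact int_hExp_mono hε.1

lemma energy_lb {ε : ℝ} (hε : 0 < ε) :
    2 * π * (∫ r in Ioo ((1:ℝ)/2) 1, r ^ 3 / (ε / 4 + r ^ 2 - 1 / 4))
      ≤ ∫ x in Metric.ball (0:E2) 1, frob2 (hess (fun y => vf (feps ε) ‖y‖) x) := by
  rw [energy_eq hε, lhs_eq]
  have h1 : (∫ r in Ioo ((1:ℝ)/2) 1, hExp ε r) ≤ ∫ y in Ioo (0:ℝ) 1, y * Fe ε y := by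
    refine le_trans (int_hExp_mono hε) ?_
    refine setIntegral_mono_on (hExp_intOn ε hε) (rFe_intOn hε) measurableSet_Ioo
      (fun y hy => ?_)
    rw [rFe_bdd hε hy]
    have : 0 ≤ Gf ε y / y := le_of_lt (div_pos (Gf_pos' hε hy.1) hy.1)
    linarith
  have hpi : (0:ℝ) ≤ 2 * π := by positivity
  calc 2 * π * (∫ r in Ioo ((1:ℝ)/2) 1, hExp ε r)
      ≤ 2 * π * ∫ y in Ioo (0:ℝ) 1, y * Fe ε y := by
        exact mul_le_mul_of_nonneg_left h1 hpi
    _ = _ := rfl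

lemma part3 : Filter.Tendsto
    (fun ε => ∫ x in Metric.ball (0 : E2) 1, frob2 (hess (fun y => vf (feps ε) ‖y‖) x))
    (nhdsWithin 0 (Set.Ioi 0)) Filter.atTop := by
  refine Filter.tendsto_atTop_mono' _ ?_
    (Filter.Tendsto.const_mul_atTop (by positivity : (0:ℝ) < 2*π) part2)
  filter_upwards [Ioo_mem_nhdsGT_of_mem (by norm_num : (0:ℝ) ∈ Ico (0:ℝ) 1)]
    with ε (hε : ε ∈ Ioo (0:ℝ) 1)
  exact energy_lb hε.1

/-- the bending energy of the radial solution for `f_ε` blows up as `ε → 0⁺`,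
while `v(x) = |x|²/2` has `det ∇²v = 1 ≥ f_ε` and energy `2π`; hence for small `ε` the radial
solution is not a minimizer of the relaxed problem. -/
theorem stmt16 :
    (∀ ε ∈ Set.Ioo (0 : ℝ) 1,
      (∫ r in Set.Ioo ((1 : ℝ) / 2) 1, r ^ 3 / (ε / 4 + r ^ 2 - 1 / 4))
        ≤ ∫ r in Set.Ioo (0 : ℝ) 1,
            r ^ 3 * (feps ε r) ^ 2 / ∫ s in Set.Ioo (0 : ℝ) r, 2 * s * feps ε s) ∧
    Filter.Tendsto (fun ε => ∫ r in Set.Ioo ((1 : ℝ) / 2) 1, r ^ 3 / (ε / 4 + r ^ 2 - 1 / 4))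
      (nhdsWithin 0 (Set.Ioi 0)) Filter.atTop ∧
    Filter.Tendsto
      (fun ε => ∫ x in Metric.ball (0 : E2) 1, frob2 (hess (fun y => vf (feps ε) ‖y‖) x))
      (nhdsWithin 0 (Set.Ioi 0)) Filter.atTop ∧
    (∀ x : E2, hessDet (fun y => ‖y‖ ^ 2 / 2) x = 1) ∧
    (∀ ε ∈ Set.Ioo (0 : ℝ) 1, ∀ r : ℝ, feps ε r ≤ 1) ∧
    ((∫ x in Metric.ball (0 : E2) 1, frob2 (hess (fun y : E2 => ‖y‖ ^ 2 / 2) x))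
      = 2 * Real.pi) ∧
    (∃ ε₀ > (0 : ℝ), ∀ ε ∈ Set.Ioo (0 : ℝ) ε₀,
      2 * Real.pi
        < ∫ x in Metric.ball (0 : E2) 1, frob2 (hess (fun y => vf (feps ε) ‖y‖) x)) := by
  refine ⟨fun ε hε => part1 hε, part2, part3, hessdet_q2, ?_, energy_q2, ?_⟩
  · intro ε hε r
    unfold feps
    split
    · exact hε.2.le
    · exact le_refl 1
  · have hev := part3.eventually_gt_atTop (2 * Real.pi)
    rw [Filter.Eventually, Metric.mem_nhdsWithin_iff] at hev
    obtain ⟨δ, hδ, hsub⟩ := hev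
    refine ⟨δ, hδ, fun ε hε => ?_⟩
    exact hsub ⟨by rw [Metric.mem_ball, Real.dist_eq, sub_zero, abs_of_pos hε.1]; exact hε.2,
      hε.1⟩
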